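/- Let p be an odd prime and k ≤ n positive integers. If n/gcd(n,k) is even, then gcd(p^k + 1, p^n - 1) = p^{gcd(k,n)} + 1. -/

import Mathlib

theorem stmt_6 (p k n : ℕ) (hp : p.Prime) (hodd : Odd p)
    (hk : 0 < k) (hkn : k ≤ n) (h : Even (n / Nat.gcd n k)) :
    Nat.gcd (p ^ k + 1) (p ^ n - 1) = p ^ Nat.gcd k n + 1 := by
  have hp1 : 1 < p := hp.one_lt
  set d := Nat.gcd k n with hd
  have hdk : d ∣ k := Nat.gcd_dvd_left k n
  have hdn : d ∣ n := Nat.gcd_dvd_right k n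
  have hd0 : 0 < d := Nat.gcd_pos_of_pos_left n hk
  rw [Nat.gcd_comm, ← hd] at h
  -- 2*d ∣ n
  have h2dn : 2 * d ∣ n := by
    obtain ⟨t, ht⟩ := h
    refine ⟨t, ?_⟩
    have := Nat.div_mul_cancel hdn
    rw [← this, ht]
    ring
  -- k/d is odd
  have hm : Odd (k / d) := by
    rw [Nat.odd_iff]
    by_contra hme
    have h2k : 2 ∣ k / d := Nat.dvd_of_mod_eq_zero (by omega)
    have h2n : 2 ∣ n / d := by
      obtain ⟨t, ht⟩ := h; exact ⟨t, by omega⟩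
    have hcop := Nat.coprime_div_gcd_div_gcd (m := k) (n := n) hd0
    have : (2 : ℕ) ∣ 1 := hcop ▸ Nat.dvd_gcd h2k h2n
    omega
  have hddk : d * (k / d) = k := Nat.mul_div_cancel' hdk
  -- p^d + 1 divides p^k + 1
  have hAk : p ^ d + 1 ∣ p ^ k + 1 := by
    have := hm.nat_add_dvd_pow_add_pow (p ^ d) 1
    rwa [one_pow, ← pow_mul, hddk] at this
  -- p^(2d) - 1 divides p^n - 1
  have h2d_n : p ^ (2 * d) - 1 ∣ p ^ n - 1 := by
    have := Nat.sub_dvd_pow_sub_pow (p ^ (2 * d)) 1 (n / (2 * d))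
    rwa [one_pow, ← pow_mul, Nat.mul_div_cancel' h2dn] at this
  -- p^d + 1 divides p^(2d) - 1
  have hA2d : p ^ d + 1 ∣ p ^ (2 * d) - 1 := by
    have : p ^ (2 * d) - 1 = (p ^ d) ^ 2 - 1 ^ 2 := by rw [← pow_mul, mul_comm d 2, one_pow]
    rw [this, Nat.sq_sub_sq]
    exact Dvd.intro _ rfl
  have hAn : p ^ d + 1 ∣ p ^ n - 1 := hA2d.trans h2d_n
  have hAg : p ^ d + 1 ∣ Nat.gcd (p ^ k + 1) (p ^ n - 1) := Nat.dvd_gcd hAk hAn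
  -- now the reverse divisibility
  set g := Nat.gcd (p ^ k + 1) (p ^ n - 1) with hg
  have hg0 : 0 < g := Nat.gcd_pos_of_pos_left _ (by positivity)
  haveI : NeZero g := ⟨hg0.ne'⟩
  have hg1 : g ∣ p ^ k + 1 := Nat.gcd_dvd_left _ _
  have hg2 : g ∣ p ^ n - 1 := Nat.gcd_dvd_right _ _
  have hk2 : p ^ k + 1 ∣ p ^ (2 * k) - 1 := by
    have : p ^ (2 * k) - 1 = (p ^ k) ^ 2 - 1 ^ 2 := by rw [← pow_mul, mul_comm k 2, one_pow]
    rw [this, Nat.sq_sub_sq]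
    exact Dvd.intro _ rfl
  have hg2k : g ∣ p ^ (2 * k) - 1 := hg1.trans hk2
  -- pass to ZMod g
  have cast_sub_one : ∀ m : ℕ, g ∣ p ^ m - 1 → (p : ZMod g) ^ m = 1 := by
    intro m hdvd
    have h1 : 1 ≤ p ^ m := Nat.one_le_pow _ _ hp.pos
    have := (ZMod.natCast_eq_zero_iff _ g).mpr hdvd
    have heq : ((p ^ m - 1 : ℕ) : ZMod g) = (p : ZMod g) ^ m - 1 := by
      push_cast [Nat.cast_sub h1]
      ring
    rw [heq] at this
    linear_combination this
  have e1 : (p : ZMod g) ^ (2 * k) = 1 := cast_sub_one _ hg2k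
  have e2 : (p : ZMod g) ^ n = 1 := cast_sub_one _ hg2
  have e3 : (p : ZMod g) ^ Nat.gcd (2 * k) n = 1 := pow_gcd_eq_one.mpr ⟨e1, e2⟩
  have egcd : Nat.gcd (2 * k) n = 2 * d := by
    apply Nat.dvd_antisymm
    · have h1 : Nat.gcd (2 * k) n ∣ 2 * k := Nat.gcd_dvd_left _ _
      have h2 : Nat.gcd (2 * k) n ∣ 2 * n := (Nat.gcd_dvd_right _ _).trans ⟨2, by ring⟩
      have := Nat.dvd_gcd h1 h2
      rwa [Nat.gcd_mul_left] at this
    · exact Nat.dvd_gcd (mul_dvd_mul_left 2 hdk) h2dn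
  rw [egcd] at e3
  have e4 : ((p : ZMod g) ^ d) ^ 2 = 1 := by
    rw [← pow_mul, mul_comm d 2]; exact e3
  -- p^k = -1 in ZMod g
  have e5 : (p : ZMod g) ^ k = -1 := by
    have := (ZMod.natCast_eq_zero_iff _ g).mpr hg1
    push_cast at this
    linear_combination this
  -- p^k = p^d in ZMod g since k/d odd
  obtain ⟨j, hj⟩ := hm
  have e6 : (p : ZMod g) ^ k = (p : ZMod g) ^ d := by
    rw [← hddk, pow_mul, hj, pow_add, pow_mul, e4, one_pow, pow_one, one_mul]
  have e7 : ((p ^ d + 1 : ℕ) : ZMod g) = 0 := by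
    push_cast
    rw [← e6, e5]; ring
  have hgA : g ∣ p ^ d + 1 := (ZMod.natCast_eq_zero_iff _ g).mp e7
  exact Nat.dvd_antisymm hgA hAg
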